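/- Any linear estimator τ̂_w = u'Y₁ + v'Y₀ that is unbiased for τ_w = w₁'τ under the restricted model τ = Γθ (for all π, θ) satisfies Γ'u = Γ'w₁ and u'Z₁ + v'Z₀ = 0; consequently τ̂_w is an unbiased estimator of the alternatively weighted estimand τ_ũ = u'τ under unrestricted treatment effects, and τ_ũ = τ_w whenever τ = Γθ holds. -/
import Mathlib


open Matrix

/-- Imputation representation with a non-trivial treatment-effect model.
If `τ̂_w = u'Y₁ + v'Y₀` is unbiased for `τ_w = w₁'Γθ` under the restricted
model `E[Y₁] = Z₁π + Γθ`, `E[Y₀] = Z₀π` for all `(π, θ)`, then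
`Γ'u = Γ'w₁` and `u'Z₁ + v'Z₀ = 0`; consequently `τ̂_w` is unbiased for the
alternatively weighted estimand `τ_ũ = u'τ` under unrestricted treatment
effects, and the two estimands agree whenever `τ = Γθ`. -/
theorem restricted_unbiased_reweighting (N₁ N₀ p k : ℕ)
    (Z₁ : Matrix (Fin N₁) (Fin p) ℝ) (Z₀ : Matrix (Fin N₀) (Fin p) ℝ)
    (Γ : Matrix (Fin N₁) (Fin k) ℝ)
    (w₁ : Fin N₁ → ℝ) (u : Fin N₁ → ℝ) (v : Fin N₀ → ℝ)
    (hunbiased : ∀ (π : Fin p → ℝ) (θ : Fin k → ℝ),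
      u ⬝ᵥ (Z₁ *ᵥ π + Γ *ᵥ θ) + v ⬝ᵥ (Z₀ *ᵥ π) = w₁ ⬝ᵥ (Γ *ᵥ θ)) :
    Γᵀ *ᵥ u = Γᵀ *ᵥ w₁ ∧
    u ᵥ* Z₁ + v ᵥ* Z₀ = 0 ∧
    (∀ (π : Fin p → ℝ) (τ : Fin N₁ → ℝ),
      u ⬝ᵥ (Z₁ *ᵥ π + τ) + v ⬝ᵥ (Z₀ *ᵥ π) = u ⬝ᵥ τ) ∧
    (∀ θ : Fin k → ℝ, u ⬝ᵥ (Γ *ᵥ θ) = w₁ ⬝ᵥ (Γ *ᵥ θ)) := by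
  have hθ : ∀ θ : Fin k → ℝ, u ⬝ᵥ (Γ *ᵥ θ) = w₁ ⬝ᵥ (Γ *ᵥ θ) := by
    intro θ
    have := hunbiased 0 θ
    simpa using this
  have hπ : ∀ π : Fin p → ℝ, u ⬝ᵥ (Z₁ *ᵥ π) + v ⬝ᵥ (Z₀ *ᵥ π) = 0 := by
    intro π
    have := hunbiased π 0
    simpa using this
  refine ⟨?_, ?_, ?_, hθ⟩
  · funext j
    have := hθ (Pi.single j 1)
    simpa [mulVec, dotProduct_mulVec, vecMul, dotProduct, transpose,
      Pi.single_apply, Finset.mul_sum, mul_comm] using this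
  · funext j
    have := hπ (Pi.single j 1)
    simpa [mulVec_single, dotProduct_mulVec, vecMul, dotProduct] using this
  · intro π τ
    have := hπ π
    simp [dotProduct_add]
    linarith
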